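/- arXiv:1806.05885 — 2 statements merged into one kernel-verified Lean document; each statement's English description precedes it below -/
import Mathlib

section
/- For every Gauss code w on n letters, proj^LP(rev(w)) = proj^LP(rev(proj^LP(w))). -/
/-- A Gauss code on `n` letters: a bijection from the `2*n` positions to
letters paired with a side (`false` = L, `true` = R). -/
abbrev GaussCode (n : ℕ) := Fin (2 * n) ≃ Fin n × Bool

instance (n : ℕ) [NeZero n] : NeZero (2 * n) := ⟨by have := NeZero.ne n; omega⟩

namespace GaussCode

variable {n : ℕ}

/-- `π_*(w)`: relabel the letters by the permutation `π`. -/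
def permAct (π : Equiv.Perm (Fin n)) (w : GaussCode n) : GaussCode n :=
  w.trans (π.prodCongr (Equiv.refl Bool))

/-- `shift[m](w)`: the code whose entry at position `i` is the entry of `w` at
position `i + m` (mod `2n`). -/
def shift [NeZero n] (m : ℕ) (w : GaussCode n) : GaussCode n :=
  (Equiv.addRight (Fin.ofNat (2 * n) m)).trans w

/-- `rev(w)`: the code whose entry at position `i` is the entry of `w` at
position `2n - 1 - i`. -/
def rev (w : GaussCode n) : GaussCode n :=
  (Fin.revPerm).trans w

/-- A Gauss code is left preferred if its `L`-entries appear in the order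
`(1,L), (2,L), …, (n,L)` and its entry at position `0` is `(1,L)`. -/
def IsLeftPreferred [NeZero n] (w : GaussCode n) : Prop :=
  StrictMono (fun j : Fin n => w.symm (j, false)) ∧ w 0 = (0, false)

/-- `proj^LP(w)`: relabel letters in the order of appearance of their `L`-entries,
then rotate so that `(1,L)` is at position `0`. -/
def projLP [NeZero n] (w : GaussCode n) : GaussCode n :=
  let π : Equiv.Perm (Fin n) := (Tuple.sort (fun j : Fin n => w.symm (j, false)))⁻¹
  let w' := permAct π w
  shift ((w'.symm ((0 : Fin n), false)).val) w'

/-- `shift^LP(w) := proj^LP(shift[1](w))`. -/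
def shiftLP [NeZero n] (w : GaussCode n) : GaussCode n :=
  projLP (shift 1 w)

/-- `rev^LP(w) := proj^LP(rev(w))`. -/
def revLP [NeZero n] (w : GaussCode n) : GaussCode n :=
  projLP (rev w)

/-- The value of an entry in the order `(1,L) < (1,R) < (2,L) < (2,R) < …`. -/
def entryKey (e : Fin n × Bool) : ℕ :=
  2 * e.1.val + (if e.2 then 1 else 0)

/-- Lexicographic (strict) order on Gauss codes, comparing entries position by
position in the order `(1,L) < (1,R) < (2,L) < (2,R) < …`. -/
def lexLt (w w' : GaussCode n) : Prop :=
  ∃ i : Fin (2 * n), (∀ k, k < i → w k = w' k) ∧ entryKey (w i) < entryKey (w' i)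

/-- Lexicographic order on Gauss codes. -/
def lexLe (w w' : GaussCode n) : Prop :=
  w = w' ∨ lexLt w w'

/-- A left preferred Gauss code is left canonical if it is the smallest element
of its `shift^LP`-orbit `{w, shift^LP(w), …, (shift^LP)^{n-1}(w)}`. -/
def IsLeftCanonical [NeZero n] (w : GaussCode n) : Prop :=
  IsLeftPreferred w ∧ ∀ k < n, lexLe w (shiftLP^[k] w)

/-- `proj^LC(w)`: the smallest element of the `shift^LP`-orbit of `proj^LP(w)`. -/
noncomputable def projLC [NeZero n] (w : GaussCode n) : GaussCode n :=
  letI := Classical.propDecidable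
  if h : ∃ v : GaussCode n, (∃ k < n, v = shiftLP^[k] (projLP w)) ∧
      ∀ k < n, lexLe v (shiftLP^[k] (projLP w))
  then h.choose else projLP w

/-- `rev^LC(w) := proj^LC(rev(w))`. -/
noncomputable def revLC [NeZero n] (w : GaussCode n) : GaussCode n :=
  projLC (rev w)

/-- Oriented equivalence of Gauss codes: `w' = shift[m](π_*(w))` for some
permutation `π` and integer `m`. -/
def OrientedEquiv [NeZero n] (w w' : GaussCode n) : Prop :=
  ∃ (π : Equiv.Perm (Fin n)) (m : ℕ), w' = shift m (permAct π w)

/-- Unoriented equivalence: `w` is orientedly equivalent to `w'` or to `rev(w')`. -/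
def UnorientedEquiv [NeZero n] (w w' : GaussCode n) : Prop :=
  OrientedEquiv w w' ∨ OrientedEquiv w (rev w')

/-- A Gauss code is 1-reducible if two cyclically adjacent entries share the same letter. -/
def OneReducible [NeZero n] (w : GaussCode n) : Prop :=
  ∃ i : Fin (2 * n), (w i).1 = (w (i + 1)).1

/-- A Gauss code is 2-reducible (cyclically, with `L = false`, `R = true`). -/
def TwoReducible [NeZero n] (w : GaussCode n) : Prop :=
  ∃ (i i' : Fin (2 * n)) (j k : Fin n), j ≠ k ∧
    ((w i = (j, false) ∧ w (i + 1) = (k, true) ∧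
        w i' = (j, true) ∧ w (i' + 1) = (k, false)) ∨
     (w i = (j, false) ∧ w (i + 1) = (k, true) ∧
        w i' = (k, false) ∧ w (i' + 1) = (j, true)) ∨
     (w i = (j, true) ∧ w (i + 1) = (k, false) ∧
        w i' = (k, true) ∧ w (i' + 1) = (j, false)))

/-- A Gauss code is minimal if it is neither 1-reducible nor 2-reducible. -/
def IsMinimal [NeZero n] (w : GaussCode n) : Prop :=
  ¬ OneReducible w ∧ ¬ TwoReducible w

/-- `σ_w`: the involution of positions sending each position to the unique other
position carrying the same letter. -/
def sigmaMap (w : GaussCode n) : Fin (2 * n) → Fin (2 * n) :=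
  fun i => w.symm ((w i).1, !(w i).2)

/-- `h_w`: the side (`false` = L, `true` = R) of the entry at each position. -/
def hMap (w : GaussCode n) : Fin (2 * n) → Bool :=
  fun i => (w i).2

end GaussCode

section Proof
set_option linter.unusedSectionVars false
namespace GaussCode

variable {n : ℕ} [NeZero n]

/-- positions of the `L`-entries. -/
private def fL (w : GaussCode n) (j : Fin n) : Fin (2 * n) := w.symm (j, false)

private lemma fL_injective (w : GaussCode n) : Function.Injective (fL w) := by
  intro a b h
  have := w.symm.injective h
  exact (Prod.ext_iff.mp this).1

private def piOf (w : GaussCode n) : Equiv.Perm (Fin n) :=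
  (Tuple.sort (fun j : Fin n => w.symm (j, false)))⁻¹

private def Mpos (w : GaussCode n) : Fin (2 * n) :=
  (permAct (piOf w) w).symm ((0 : Fin n), false)

private lemma projLP_eq (w : GaussCode n) :
    projLP w = shift (Mpos w).val (permAct (piOf w) w) := rfl

private lemma fL_permAct (π : Equiv.Perm (Fin n)) (w : GaussCode n) (j : Fin n) :
    fL (permAct π w) j = fL w (π.symm j) := by
  simp [fL, permAct]

private lemma fL_sorted (w : GaussCode n) :
    fL (permAct (piOf w) w) = fL w ∘ (Tuple.sort (fL w)) := by
  funext j
  rw [fL_permAct]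
  rfl

private lemma strictMono_sorted (w : GaussCode n) :
    StrictMono (fL (permAct (piOf w) w)) := by
  rw [fL_sorted]
  exact (Tuple.monotone_sort (fL w)).strictMono_of_injective
    ((fL_injective w).comp (Tuple.sort (fL w)).injective)

private lemma Mpos_eq (w : GaussCode n) :
    Mpos w = fL (permAct (piOf w) w) 0 := rfl

private lemma Mpos_le (w : GaussCode n) (j : Fin n) :
    Mpos w ≤ fL (permAct (piOf w) w) j := by
  rw [Mpos_eq]
  exact (strictMono_sorted w).monotone (Fin.zero_le j)

private lemma Mpos_min (w : GaussCode n) (k : Fin n) : Mpos w ≤ fL w k := by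
  have h : fL w k = fL (permAct (piOf w) w) ((Tuple.sort (fL w)).symm k) := by
    rw [fL_sorted]; simp
  rw [h]
  exact Mpos_le w _

private lemma Mpos_mem (w : GaussCode n) : ∃ j, fL w j = Mpos w := by
  refine ⟨Tuple.sort (fL w) 0, ?_⟩
  rw [Mpos_eq, fL_sorted]
  rfl

/-- `sh`: shift with a `Fin`-valued amount. -/
private def sh (a : Fin (2 * n)) (w : GaussCode n) : GaussCode n :=
  (Equiv.addRight a).trans w

private lemma shift_val_eq_sh (a : Fin (2 * n)) (w : GaussCode n) :
    shift a.val w = sh a w := by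
  unfold shift sh
  rw [Fin.ofNat_val_eq_self]

private lemma fL_sh (a : Fin (2 * n)) (w : GaussCode n) (j : Fin n) :
    fL (sh a w) j = fL w j - a := by
  simp [fL, sh, sub_eq_add_neg]

private lemma fL_rev (w : GaussCode n) (j : Fin n) :
    fL (rev w) j = Fin.rev (fL w j) := rfl

private lemma permAct_permAct (π ρ : Equiv.Perm (Fin n)) (w : GaussCode n) :
    permAct π (permAct ρ w) = permAct (ρ.trans π) w := by
  refine Equiv.ext fun i => ?_
  rfl

private lemma permAct_refl (w : GaussCode n) :
    permAct (Equiv.refl (Fin n)) w = w := by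
  refine Equiv.ext fun i => ?_
  show ((w i).1, (w i).2) = w i
  rfl

private lemma sh_permAct (a : Fin (2 * n)) (π : Equiv.Perm (Fin n)) (w : GaussCode n) :
    sh a (permAct π w) = permAct π (sh a w) := rfl

private lemma sh_sh (a b : Fin (2 * n)) (w : GaussCode n) :
    sh a (sh b w) = sh (b + a) w := by
  refine Equiv.ext fun i => ?_
  show w ((i + a) + b) = w (i + (b + a))
  rw [add_assoc, add_comm a b]

private lemma rev_permAct (π : Equiv.Perm (Fin n)) (w : GaussCode n) :
    rev (permAct π w) = permAct π (rev w) := rfl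

private lemma rev_sh (a : Fin (2 * n)) (w : GaussCode n) :
    rev (sh a w) = sh (-a) (rev w) := by
  refine Equiv.ext fun i => ?_
  show w (Fin.rev i + a) = w (Fin.rev (i + -a))
  rw [← sub_eq_add_neg, Fin.rev_sub]

/-- `projLP w` is left preferred. -/
private lemma isLeftPreferred_projLP (w : GaussCode n) : IsLeftPreferred (projLP w) := by
  rw [projLP_eq, shift_val_eq_sh]
  constructor
  · have hsm := strictMono_sorted w
    intro a b hab
    show fL (sh (Mpos w) (permAct (piOf w) w)) a < fL (sh (Mpos w) (permAct (piOf w) w)) b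
    rw [fL_sh, fL_sh]
    have ha : Mpos w ≤ fL (permAct (piOf w) w) a := Mpos_le w a
    have hb : Mpos w ≤ fL (permAct (piOf w) w) b := Mpos_le w b
    have hlt : fL (permAct (piOf w) w) a < fL (permAct (piOf w) w) b := hsm hab
    rw [Fin.lt_iff_val_lt_val, Fin.sub_val_of_le ha, Fin.sub_val_of_le hb]
    have h1 := Fin.le_iff_val_le_val.mp ha
    have h2 := Fin.le_iff_val_le_val.mp hb
    have h3 := Fin.lt_iff_val_lt_val.mp hlt
    omega
  · show (permAct (piOf w) w) (0 + Mpos w) = ((0 : Fin n), false)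
    rw [zero_add, Mpos]
    exact Equiv.apply_symm_apply _ _

/-- uniqueness of the left-preferred form under relabelling. -/
private lemma permAct_eq_self {u : GaussCode n} (ρ : Equiv.Perm (Fin n))
    (hu : IsLeftPreferred u) (hv : IsLeftPreferred (permAct ρ u)) : permAct ρ u = u := by
  have h1 : StrictMono (fL u) := hu.1
  have h2 : StrictMono (fL u ∘ ρ.symm) := by
    have hv1 := hv.1
    have heq : (fun j : Fin n => (permAct ρ u).symm (j, false)) = fL u ∘ ρ.symm := by
      funext j; exact fL_permAct ρ u j
    rwa [heq] at hv1
  have hrange : Set.range (fL u ∘ ρ.symm) = Set.range (fL u) := by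
    rw [Set.range_comp, Equiv.range_eq_univ, Set.image_univ]
  haveI : WellFoundedLT (Fin n) := inferInstance
  have hfeq : fL u ∘ ρ.symm = fL u := (h2.range_inj h1).1 hrange
  have hid : ∀ j, ρ.symm j = j := fun j => fL_injective u (congrFun hfeq j)
  refine Equiv.ext fun i => ?_
  show (ρ (u i).1, (u i).2) = u i
  have hρ : ρ (u i).1 = (u i).1 := by
    conv_lhs => rw [← hid (u i).1]
    exact ρ.apply_symm_apply _
  rw [hρ]

theorem stmt2' (w : GaussCode n) :
    projLP (rev w) = projLP (rev (projLP w)) := by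
  classical
  let u : GaussCode n := rev w
  let m : Fin (2 * n) := Mpos w
  let π : Equiv.Perm (Fin n) := piOf w
  have hrpl : rev (projLP w) = permAct π (sh (-m) u) := by
    rw [projLP_eq, shift_val_eq_sh, rev_sh, rev_permAct, sh_permAct]
  let u'' : GaussCode n := rev (projLP w)
  have hrpl' : u'' = permAct π (sh (-m) u) := hrpl
  have hfLu'' : ∀ j, fL u'' j = fL u (π.symm j) + m := by
    intro j
    rw [hrpl', fL_permAct, fL_sh, sub_neg_eq_add]
  have hnowrap : ∀ j, (fL u j).val + m.val < 2 * n := by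
    intro j
    have h1 : m.val ≤ (fL w j).val := Fin.le_iff_val_le_val.mp (Mpos_min w j)
    have h2 : (fL u j).val = 2 * n - ((fL w j).val + 1) := by
      show (fL (rev w) j).val = _
      rw [fL_rev, Fin.val_rev]
    have h3 := (fL w j).isLt
    omega
  have hvadd : ∀ j, (fL u j + m).val = (fL u j).val + m.val := by
    intro j; exact Fin.val_add_eq_of_add_lt (hnowrap j)
  obtain ⟨j₁, hj₁⟩ := Mpos_mem u
  have hkey : Mpos u'' = Mpos u + m := by
    apply le_antisymm
    · have h : fL u'' (π j₁) = Mpos u + m := by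
        rw [hfLu'', Equiv.symm_apply_apply, hj₁]
      rw [← h]; exact Mpos_min u'' (π j₁)
    · obtain ⟨j₂, hj₂⟩ := Mpos_mem u''
      rw [← hj₂, hfLu'' j₂, ← hj₁]
      have h1 : fL u j₁ ≤ fL u (π.symm j₂) := by rw [hj₁]; exact Mpos_min u _
      rw [Fin.le_iff_val_le_val, hvadd, hvadd]
      exact Nat.add_le_add_right (Fin.le_iff_val_le_val.mp h1) _
  -- express projLP u'' in terms of projLP u
  have hLHS : projLP u = sh (Mpos u) (permAct (piOf u) u) := by
    rw [projLP_eq, shift_val_eq_sh]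
  have e2 : sh (Mpos u) u = permAct (piOf u)⁻¹ (projLP u) := by
    rw [hLHS, ← sh_permAct, permAct_permAct]
    show sh (Mpos u) u = sh (Mpos u) (permAct ((piOf u).trans (piOf u).symm) u)
    rw [Equiv.self_trans_symm, permAct_refl]
  have harith : -m + (Mpos u + m) = Mpos u := by
    rw [add_comm (Mpos u) m, ← add_assoc, neg_add_cancel, zero_add]
  have hRHS : projLP u'' =
      permAct ((piOf u)⁻¹.trans (π.trans (piOf u''))) (projLP u) := by
    calc projLP u''
        = sh (Mpos u + m) (permAct (piOf u'') u'') := by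
          rw [projLP_eq, shift_val_eq_sh, hkey]
      _ = sh (Mpos u + m) (permAct (π.trans (piOf u'')) (sh (-m) u)) := by
          rw [hrpl', permAct_permAct]
      _ = permAct (π.trans (piOf u'')) (sh (Mpos u + m) (sh (-m) u)) := by
          rw [sh_permAct]
      _ = permAct (π.trans (piOf u'')) (sh (Mpos u) u) := by
          rw [sh_sh, harith]
      _ = permAct (π.trans (piOf u'')) (permAct (piOf u)⁻¹ (projLP u)) := by rw [e2]
      _ = permAct ((piOf u)⁻¹.trans (π.trans (piOf u''))) (projLP u) := by
          rw [permAct_permAct]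
  have h1 := isLeftPreferred_projLP u
  have h2 := isLeftPreferred_projLP u''
  rw [hRHS] at h2
  show projLP u = projLP u''
  rw [hRHS]
  exact (permAct_eq_self _ h1 h2).symm

end GaussCode
end Proof

open GaussCode in
/-- `proj^LP(rev(w)) = proj^LP(rev(proj^LP(w)))`. -/
theorem stmt2 (n : ℕ) [NeZero n] (w : GaussCode n) :
    projLP (rev w) = projLP (rev (projLP w)) := by
  exact stmt2' w
end

section
/- For every left preferred Gauss code w on n letters, rev^LP(rev^LP(w)) = w; that is, rev^LP is an involution of the set of left preferred Gauss codes on n letters. -/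
section Stmt4Aux

open GaussCode

variable {n : ℕ}

private lemma sort_eq_of_strictMono {α} [LinearOrder α] {f : Fin n → α}
    {σ : Equiv.Perm (Fin n)} (h : StrictMono (f ∘ σ)) : Tuple.sort f = σ :=
  (Tuple.eq_sort_iff.2 ⟨h.monotone, fun i j hij hf => absurd hf (h hij).ne⟩).symm

private lemma permAct_apply (π : Equiv.Perm (Fin n)) (w : GaussCode n) (i : Fin (2 * n)) :
    permAct π w i = (π (w i).1, (w i).2) := rfl

private lemma permAct_symm_apply (π : Equiv.Perm (Fin n)) (w : GaussCode n) (j : Fin n)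
    (b : Bool) : (permAct π w).symm (j, b) = w.symm (π⁻¹ j, b) := rfl

private lemma shift_apply [NeZero n] (m : ℕ) (w : GaussCode n) (i : Fin (2 * n)) :
    shift m w i = w (i + Fin.ofNat (2 * n) m) := rfl

private lemma shift_symm_apply [NeZero n] (m : ℕ) (w : GaussCode n) (e : Fin n × Bool) :
    (shift m w).symm e = w.symm e - Fin.ofNat (2 * n) m := by
  simp [shift, sub_eq_add_neg]

private lemma rev_apply (w : GaussCode n) (i : Fin (2 * n)) : rev w i = w i.rev := rfl

private lemma rev_symm_apply (w : GaussCode n) (e : Fin n × Bool) :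
    (rev w).symm e = (w.symm e).rev := by
  simp [rev]

private lemma revPerm_inv_apply (j : Fin n) :
    (Fin.revPerm : Equiv.Perm (Fin n))⁻¹ j = j.rev := rfl

private lemma projLP_of_strictAnti [NeZero n] (u : GaussCode n)
    (hf : StrictAnti fun j : Fin n => u.symm (j, false)) :
    projLP u = shift (u.symm ((0 : Fin n).rev, false)).val (permAct Fin.revPerm u) := by
  have hsort : Tuple.sort (fun j : Fin n => u.symm (j, false)) = Fin.revPerm := by
    apply sort_eq_of_strictMono
    intro a b hab
    exact hf (Fin.rev_lt_rev.mpr hab)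
  have hinv : ((Fin.revPerm : Equiv.Perm (Fin n)))⁻¹ = Fin.revPerm := rfl
  simp only [projLP, hsort, hinv, permAct_symm_apply, revPerm_inv_apply, Fin.revPerm_apply]

end Stmt4Aux

open GaussCode in
/-- `rev^LP` is an involution of the set of left preferred Gauss codes. -/
theorem stmt4 (n : ℕ) [NeZero n] (w : GaussCode n) (hw : IsLeftPreferred w) :
    IsLeftPreferred (revLP w) ∧ revLP (revLP w) = w := by
  obtain ⟨hp, h0⟩ := hw
  have hp0 : w.symm ((0 : Fin n), false) = 0 := by rw [← h0, Equiv.symm_apply_apply]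
  set P : Fin (2 * n) := w.symm ((0 : Fin n).rev, false) with hP
  have hPle : ∀ j : Fin n, (w.symm (j, false)).val ≤ P.val := by
    intro j
    have hj : j ≤ (0 : Fin n).rev := by
      rw [Fin.le_def, Fin.val_rev]
      have h00 : ((0 : Fin n)).val = 0 := by simp
      have := j.isLt; omega
    exact Fin.le_def.mp (hp.monotone hj)
  have hanti1 : StrictAnti fun j : Fin n => (rev w).symm (j, false) := by
    intro a b hab
    simp only [rev_symm_apply]
    exact Fin.rev_lt_rev.mpr (hp hab)
  have hv : revLP w = shift (P.rev).val (permAct Fin.revPerm (rev w)) := by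
    have := projLP_of_strictAnti (rev w) hanti1
    rwa [rev_symm_apply] at this
  set v : GaussCode n := shift (P.rev).val (permAct Fin.revPerm (rev w)) with hvdef
  have hval : ∀ j : Fin n, (v.symm (j, false)).val = P.val - (w.symm (j.rev, false)).val := by
    intro j
    rw [hvdef, shift_symm_apply, permAct_symm_apply, revPerm_inv_apply, rev_symm_apply,
      Fin.ofNat_val_eq_self, Fin.sub_def]
    simp only [Fin.val_rev]
    have h1 := hPle j.rev
    have h2 := P.isLt
    have h3 : 0 < 2 * n := Nat.pos_of_ne_zero (NeZero.ne _)
    have heq : 2 * n - (2 * n - (P.val + 1)) + (2 * n - ((w.symm (j.rev, false)).val + 1))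
        = 2 * n + (P.val - (w.symm (j.rev, false)).val) := by omega
    rw [heq, Nat.add_mod_left, Nat.mod_eq_of_lt (by omega)]
  have hmono : StrictMono fun j : Fin n => v.symm (j, false) := by
    intro a b hab
    have h3 : w.symm (b.rev, false) < w.symm (a.rev, false) := hp (Fin.rev_lt_rev.mpr hab)
    rw [Fin.lt_def] at h3 ⊢
    rw [hval a, hval b]
    have h4 := hPle a.rev
    omega
  have hv0 : v 0 = ((0 : Fin n), false) := by
    rw [hvdef, shift_apply, Fin.ofNat_val_eq_self, zero_add, permAct_apply, rev_apply,
      Fin.rev_rev, hP, Equiv.apply_symm_apply]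
    simp
  constructor
  · rw [hv]
    exact ⟨hmono, hv0⟩
  · have hanti2 : StrictAnti fun j : Fin n => (rev v).symm (j, false) := by
      intro a b hab
      simp only [rev_symm_apply]
      exact Fin.rev_lt_rev.mpr (hmono hab)
    have hm2 : (rev v).symm ((0 : Fin n).rev, false) = P.rev := by
      rw [rev_symm_apply]
      congr 1
      apply Fin.ext
      rw [hval, Fin.rev_rev, hp0]
      simp
    have hv2 : revLP v = shift (P.rev).val (permAct Fin.revPerm (rev v)) := by
      have := projLP_of_strictAnti (rev v) hanti2
      rwa [hm2] at this
    rw [hv, hv2]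
    refine Equiv.ext fun i => ?_
    have hz : ((i + P.rev).rev + P.rev).rev = i := by
      rw [Fin.rev_add, Fin.rev_rev, add_sub_cancel_right]
    rw [shift_apply, Fin.ofNat_val_eq_self, permAct_apply, rev_apply, hvdef,
      shift_apply, Fin.ofNat_val_eq_self, permAct_apply, rev_apply, hz]
    simp
end
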